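/- Let C = {c_1,...,c_N} be a finite set and F a finite class of functions f : C → ℝ with f(x) ∈ [−1,1], and suppose E[f(Z)] = 0 for Z uniform on C. Let Q_m = sup_{f∈F} Σ_{i=1}^m f(X_i) for X_1,...,X_m sampled uniformly with replacement, and Q'_m = sup_{f∈F} Σ_{i=1}^m f(Z_i) for Z_1,...,Z_m sampled uniformly without replacement. Then 0 ≤ E[Q_m] − E[Q'_m] ≤ 2 m³ / N. -/

import Mathlib

open Finset



lemma card_supersets {α : Type*} [DecidableEq α] [Fintype α] (A : Finset α) (m : ℕ)
    (hA : A.card ≤ m) :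
    ((powersetCard m (univ : Finset α)).filter (fun S => A ⊆ S)).card
      = (Fintype.card α - A.card).choose (m - A.card) := by
  rw [← Finset.card_compl, ← Finset.card_powersetCard]
  apply Finset.card_bij' (fun S _ => S \ A) (fun T _ => T ∪ A)
  · intro S hS
    simp only [mem_filter, mem_powersetCard] at hS
    rw [mem_powersetCard]
    refine ⟨fun x hx => ?_, ?_⟩
    · simp only [mem_sdiff] at hx; simpa using hx.2
    · rw [Finset.card_sdiff_of_subset hS.2, hS.1.2]
  · intro T hT
    rw [mem_powersetCard] at hT
    simp only [mem_filter, mem_powersetCard]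
    have hdisj : Disjoint T A := by
      refine Finset.disjoint_left.2 fun x hx hxA => ?_
      have := hT.1 hx; simp at this; exact this hxA
    refine ⟨⟨Finset.subset_univ _, ?_⟩, Finset.subset_union_right⟩
    rw [Finset.card_union_of_disjoint hdisj, hT.2]
    omega
  · intro S hS
    simp only [mem_filter] at hS
    rw [Finset.sdiff_union_of_subset hS.2]
  · intro T hT
    rw [mem_powersetCard] at hT
    have hdisj : Disjoint T A := by
      refine Finset.disjoint_left.2 fun x hx hxA => ?_
      have := hT.1 hx; simp at this; exact this hxA
    rw [Finset.union_sdiff_cancel_right hdisj]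



lemma weier {ι : Type*} (s : Finset ι) (a : ι → ℝ) (h0 : ∀ i ∈ s, 0 ≤ a i)
    (h1 : ∀ i ∈ s, a i ≤ 1) :
    1 - ∑ i ∈ s, a i ≤ ∏ i ∈ s, (1 - a i) := by
  induction s using Finset.cons_induction with
  | empty => simp
  | cons j s hj ih =>
    rw [Finset.sum_cons, Finset.prod_cons]
    have h0' : ∀ i ∈ s, 0 ≤ a i := fun i hi => h0 i (mem_cons_of_mem hi)
    have h1' : ∀ i ∈ s, a i ≤ 1 := fun i hi => h1 i (mem_cons_of_mem hi)
    have ihs := ih h0' h1'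
    have hja0 := h0 j (mem_cons_self j s)
    have hja1 := h1 j (mem_cons_self j s)
    have hs0 : (0:ℝ) ≤ ∑ i ∈ s, a i := Finset.sum_nonneg h0'
    nlinarith [Finset.prod_nonneg (fun i hi => sub_nonneg.2 (h1' i hi))]



private def img {N m : ℕ} (ω : Fin m → Fin N) : Finset (Fin N) := Finset.image ω Finset.univ

private lemma img_card_le {N m : ℕ} (ω : Fin m → Fin N) : (img ω).card ≤ m := by
  calc (img ω).card ≤ (univ : Finset (Fin m)).card := Finset.card_image_le
  _ = m := by simp

private noncomputable def wgt (N m : ℕ) (ω : Fin m → Fin N) (S : Finset (Fin N)) : ℝ :=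
  if img ω ⊆ S then ((N - (img ω).card).choose (m - (img ω).card) : ℝ)⁻¹ else 0

private lemma wgt_nonneg {N m : ℕ} (ω : Fin m → Fin N) (S : Finset (Fin N)) :
    0 ≤ wgt N m ω S := by
  unfold wgt; split
  · positivity
  · exact le_rfl

private lemma choose_ne {N m k : ℕ} (hm : m ≤ N) (hk : k ≤ m) :
    ((N - k).choose (m - k) : ℝ) ≠ 0 := by
  have : 0 < (N - k).choose (m - k) := Nat.choose_pos (by omega)
  positivity

private lemma rowsum {N m : ℕ} (hm : m ≤ N) (ω : Fin m → Fin N) :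
    ∑ S ∈ powersetCard m (univ : Finset (Fin N)), wgt N m ω S = 1 := by
  unfold wgt
  rw [Finset.sum_ite, Finset.sum_const_zero, add_zero, Finset.sum_const,
    card_supersets _ _ (img_card_le ω)]
  rw [nsmul_eq_mul]
  simp only [Fintype.card_fin]
  exact mul_inv_cancel₀ (choose_ne hm (img_card_le ω))



private def cnt {N m : ℕ} (x : Fin N) (ω : Fin m → Fin N) : ℕ :=
  (Finset.univ.filter (fun i => ω i = x)).card

private lemma sum_eq_cnt {N m : ℕ} (ω : Fin m → Fin N) (f : Fin N → ℝ) :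
    ∑ i, f (ω i) = ∑ x : Fin N, (cnt x ω : ℝ) * f x := by
  rw [← Finset.sum_fiberwise Finset.univ ω (fun i => f (ω i))]
  refine Finset.sum_congr rfl fun x _ => ?_
  have : ∀ i ∈ Finset.univ.filter (fun i => ω i = x), f (ω i) = f x := by
    intro i hi; simp only [mem_filter] at hi; rw [hi.2]
  rw [Finset.sum_congr rfl this, Finset.sum_const, cnt, nsmul_eq_mul]

private lemma cnt_zero {N m : ℕ} {ω : Fin m → Fin N} {x : Fin N} (hx : x ∉ img ω) :
    cnt x ω = 0 := by
  rw [cnt, Finset.card_eq_zero, Finset.filter_eq_empty_iff]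
  intro i _ h
  exact hx (Finset.mem_image.2 ⟨i, Finset.mem_univ i, h⟩)

private lemma cnt_total {N m : ℕ} (ω : Fin m → Fin N) :
    ∑ x : Fin N, cnt x ω = m := by
  unfold cnt
  rw [← Finset.card_eq_sum_card_fiberwise (fun i _ => Finset.mem_univ (ω i))]
  simp

-- swap invariance

private lemma swap_mem {N : ℕ} {S : Finset (Fin N)} {x y : Fin N} (hx : x ∈ S) (hy : y ∈ S)
    (z : Fin N) : (Equiv.swap x y) z ∈ S ↔ z ∈ S := by
  rcases eq_or_ne z x with rfl | hzx
  · simp [Equiv.swap_apply_left, hy, hx]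
  rcases eq_or_ne z y with rfl | hzy
  · simp [Equiv.swap_apply_right, hy, hx]
  · rw [Equiv.swap_apply_of_ne_of_ne hzx hzy]

private lemma wgt_swap {N m : ℕ} {S : Finset (Fin N)} {x y : Fin N} (hx : x ∈ S) (hy : y ∈ S)
    (ω : Fin m → Fin N) : wgt N m ((Equiv.swap x y) ∘ ω) S = wgt N m ω S := by
  have himg : img ((Equiv.swap x y) ∘ ω) = (img ω).image (Equiv.swap x y) := by
    unfold img; rw [Finset.image_image]
  have hcard : (img ((Equiv.swap x y) ∘ ω)).card = (img ω).card := by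
    rw [himg, Finset.card_image_of_injective _ (Equiv.injective _)]
  have hsub : img ((Equiv.swap x y) ∘ ω) ⊆ S ↔ img ω ⊆ S := by
    rw [himg]
    constructor
    · intro h z hz
      rw [← swap_mem hx hy z]
      exact h (Finset.mem_image_of_mem _ hz)
    · intro h z hz
      obtain ⟨u, hu, rfl⟩ := Finset.mem_image.1 hz
      exact (swap_mem hx hy u).2 (h hu)
  unfold wgt
  rw [hcard]
  by_cases h : img ω ⊆ S
  · rw [if_pos h, if_pos (hsub.2 h)]
  · rw [if_neg h, if_neg (fun h' => h (hsub.1 h'))]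

private lemma cnt_swap {N m : ℕ} (x y : Fin N) (ω : Fin m → Fin N) :
    cnt x ((Equiv.swap x y) ∘ ω) = cnt y ω := by
  unfold cnt
  congr 1
  apply Finset.filter_congr
  intro i _
  simp only [Function.comp_apply]
  constructor
  · intro h
    have := congrArg (Equiv.swap x y) h
    rwa [Equiv.swap_apply_self, Equiv.swap_apply_left] at this
  · intro h; rw [h, Equiv.swap_apply_right]

private lemma A_eq {N m : ℕ} {S : Finset (Fin N)} {x y : Fin N} (hx : x ∈ S) (hy : y ∈ S) :
    ∑ ω : Fin m → Fin N, wgt N m ω S * (cnt x ω : ℝ)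
      = ∑ ω : Fin m → Fin N, wgt N m ω S * (cnt y ω : ℝ) := by
  refine Fintype.sum_equiv (Equiv.arrowCongr (Equiv.refl (Fin m)) (Equiv.swap x y))
    (fun ω => wgt N m ω S * (cnt x ω : ℝ))
    (fun ω => wgt N m ω S * (cnt y ω : ℝ)) (fun ω => ?_)
  have harr : (Equiv.arrowCongr (Equiv.refl (Fin m)) (Equiv.swap x y)) ω
      = (Equiv.swap x y) ∘ ω := by
    funext i; simp [Equiv.arrowCongr]
  have h1 : wgt N m (((Equiv.refl (Fin m)).arrowCongr (Equiv.swap x y)) ω) S = wgt N m ω S := by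
    rw [harr, wgt_swap hx hy]
  have h2 : cnt y (((Equiv.refl (Fin m)).arrowCongr (Equiv.swap x y)) ω) = cnt x ω := by
    rw [harr, Equiv.swap_comm, cnt_swap]
  rw [h1, h2]



private noncomputable def cval (N m : ℕ) : ℝ :=
  ∑ τ : Fin m → Fin m, ((N - (img τ).card).choose (m - (img τ).card) : ℝ)⁻¹

private lemma massconst {N m : ℕ} (hm0 : 0 < m) {S : Finset (Fin N)}
    (hS : S ∈ powersetCard m (univ : Finset (Fin N))) :
    ∑ ω : Fin m → Fin N, wgt N m ω S = cval N m := by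
  have hScard : S.card = m := (mem_powersetCard.1 hS).2
  have hne : S.Nonempty := Finset.card_pos.1 (by omega)
  let e : Fin m ≃ {x // x ∈ S} := ((S.equivFin).trans (finCongr hScard)).symm
  let ρ : Fin N → Fin m := fun z => if h : z ∈ S then e.symm ⟨z, h⟩ else ⟨0, hm0⟩
  unfold wgt
  rw [Finset.sum_ite, Finset.sum_const_zero, add_zero]
  unfold cval
  refine Finset.sum_bij' (i := fun ω _ => ρ ∘ ω) (j := fun τ _ => fun k => (e (τ k) : Fin N))
    ?_ ?_ ?_ ?_ ?_
  · intro ω hω; exact Finset.mem_univ _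
  · intro τ _
    simp only [Finset.mem_filter]
    refine ⟨Finset.mem_univ _, fun z hz => ?_⟩
    obtain ⟨k, _, rfl⟩ := Finset.mem_image.1 hz
    exact (e (τ k)).2
  · intro ω hω
    have hsub : img ω ⊆ S := (Finset.mem_filter.1 hω).2
    funext k
    have hk : ω k ∈ S := hsub (Finset.mem_image_of_mem ω (Finset.mem_univ k))
    show (e (ρ (ω k)) : Fin N) = ω k
    simp only [ρ, dif_pos hk, Equiv.apply_symm_apply]
  · intro τ _
    funext k
    show ρ ((e (τ k) : Fin N)) = τ k
    have : ((e (τ k) : Fin N)) ∈ S := (e (τ k)).2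
    simp only [ρ, dif_pos this, Subtype.coe_eta, Equiv.symm_apply_apply]
  · intro ω hω
    have hsub : img ω ⊆ S := (Finset.mem_filter.1 hω).2
    have hcard : (img (ρ ∘ ω)).card = (img ω).card := by
      have h1 : img (ρ ∘ ω) = (img ω).image ρ := by
        unfold img; rw [Finset.image_image]
      rw [h1]
      apply Finset.card_image_of_injOn
      intro a ha b hb hab
      have haS : a ∈ S := hsub ha
      have hbS : b ∈ S := hsub hb
      simp only [ρ, dif_pos haS, dif_pos hbS] at hab
      have := e.symm.injective hab
      exact Subtype.ext_iff.1 this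
    rw [hcard]
section
variable {N m : ℕ}

private lemma cnt_sum_S {S : Finset (Fin N)} {ω : Fin m → Fin N} (h : img ω ⊆ S) :
    ∑ y ∈ S, (cnt y ω : ℝ) = (m : ℝ) := by
  have h1 : ∑ y ∈ S, (cnt y ω : ℝ) = ∑ y : Fin N, (cnt y ω : ℝ) := by
    apply Finset.sum_subset (Finset.subset_univ S)
    intro y _ hy
    rw [cnt_zero (fun hmem => hy (h hmem))]
    simp
  rw [h1, ← Nat.cast_sum, cnt_total]

private lemma colA (hm0 : 0 < m) {S : Finset (Fin N)}
    (hS : S ∈ powersetCard m (univ : Finset (Fin N))) {x : Fin N} (hx : x ∈ S) :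
    ∑ ω : Fin m → Fin N, wgt N m ω S * (cnt x ω : ℝ)
      = ∑ ω : Fin m → Fin N, wgt N m ω S := by
  have hScard : S.card = m := (mem_powersetCard.1 hS).2
  have key : (m : ℝ) * (∑ ω : Fin m → Fin N, wgt N m ω S * (cnt x ω : ℝ))
      = (m : ℝ) * ∑ ω : Fin m → Fin N, wgt N m ω S := by
    calc (m : ℝ) * (∑ ω : Fin m → Fin N, wgt N m ω S * (cnt x ω : ℝ))
        = ∑ y ∈ S, ∑ ω : Fin m → Fin N, wgt N m ω S * (cnt y ω : ℝ) := by
          rw [Finset.sum_congr rfl (fun y hy => A_eq hy hx), Finset.sum_const, hScard,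
            nsmul_eq_mul]
      _ = ∑ ω : Fin m → Fin N, ∑ y ∈ S, wgt N m ω S * (cnt y ω : ℝ) := Finset.sum_comm
      _ = ∑ ω : Fin m → Fin N, wgt N m ω S * (m : ℝ) := by
          refine Finset.sum_congr rfl fun ω _ => ?_
          by_cases h : img ω ⊆ S
          · rw [← Finset.mul_sum, cnt_sum_S h]
          · simp [wgt, h]
      _ = (m : ℝ) * ∑ ω : Fin m → Fin N, wgt N m ω S := by
          rw [← Finset.sum_mul, mul_comm]
  have hm' : (m : ℝ) ≠ 0 := by positivity
  exact mul_left_cancel₀ hm' key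

private lemma colsum (hm0 : 0 < m) {S : Finset (Fin N)}
    (hS : S ∈ powersetCard m (univ : Finset (Fin N))) (f : Fin N → ℝ) :
    ∑ ω : Fin m → Fin N, wgt N m ω S * (∑ i, f (ω i))
      = (∑ ω : Fin m → Fin N, wgt N m ω S) * ∑ x ∈ S, f x := by
  have step1 : ∀ ω : Fin m → Fin N,
      wgt N m ω S * (∑ i, f (ω i)) = ∑ x ∈ S, wgt N m ω S * ((cnt x ω : ℝ) * f x) := by
    intro ω
    by_cases h : img ω ⊆ S
    · rw [← Finset.mul_sum]
      congr 1
      rw [sum_eq_cnt]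
      symm
      apply Finset.sum_subset (Finset.subset_univ S)
      intro y _ hy
      rw [cnt_zero (fun hmem => hy (h hmem))]
      simp
    · simp [wgt, h]
  rw [Finset.sum_congr rfl (fun ω _ => step1 ω), Finset.sum_comm, Finset.mul_sum]
  refine Finset.sum_congr rfl fun x hx => ?_
  calc ∑ ω : Fin m → Fin N, wgt N m ω S * ((cnt x ω : ℝ) * f x)
      = (∑ ω : Fin m → Fin N, wgt N m ω S * (cnt x ω : ℝ)) * f x := by
        rw [Finset.sum_mul]; exact Finset.sum_congr rfl fun ω _ => by ring
    _ = (∑ ω : Fin m → Fin N, wgt N m ω S) * f x := by rw [colA hm0 hS hx]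
end
section
variable {N m : ℕ}

private lemma fibercard {S : Finset (Fin N)}
    (hS : S ∈ powersetCard m (univ : Finset (Fin N))) :
    ((univ : Finset (Fin m ↪ Fin N)).filter
      (fun σ => Finset.univ.map σ = S)).card = Nat.factorial m := by
  have hScard : S.card = m := (mem_powersetCard.1 hS).2
  have hmem : ∀ (σ : Fin m ↪ Fin N), Finset.univ.map σ = S → ∀ k, σ k ∈ S := by
    intro σ h k
    have : σ k ∈ Finset.univ.map σ := Finset.mem_map_of_mem σ (Finset.mem_univ k)
    rwa [h] at this
  have e : {σ : Fin m ↪ Fin N // Finset.univ.map σ = S} ≃ (Fin m ↪ {x // x ∈ S}) :=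
    { toFun := fun p =>
        ⟨fun k => ⟨p.1 k, hmem p.1 p.2 k⟩, fun a b h => p.1.injective (congrArg Subtype.val h)⟩
      invFun := fun τ =>
        ⟨τ.trans (Function.Embedding.subtype _), by
          apply Finset.eq_of_subset_of_card_le
          · intro z hz
            obtain ⟨k, _, rfl⟩ := Finset.mem_map.1 hz
            exact (τ k).2
          · rw [Finset.card_map, Finset.card_univ, Fintype.card_fin, hScard]⟩
      left_inv := fun p => by ext k; rfl
      right_inv := fun τ => by ext k; rfl }
  rw [← Fintype.card_subtype, Fintype.card_congr e, Fintype.card_embedding_eq,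
    Fintype.card_coe, hScard, Fintype.card_fin, Nat.descFactorial_self]

private lemma embsum (g : Finset (Fin N) → ℝ) :
    ∑ σ : Fin m ↪ Fin N, g (Finset.univ.map σ)
      = ∑ S ∈ powersetCard m (univ : Finset (Fin N)), (Nat.factorial m : ℝ) * g S := by
  have hmaps : ∀ σ : Fin m ↪ Fin N, σ ∈ (univ : Finset (Fin m ↪ Fin N)) →
      Finset.univ.map σ ∈ powersetCard m (univ : Finset (Fin N)) := by
    intro σ _
    rw [Finset.mem_powersetCard]
    exact ⟨Finset.subset_univ _, by rw [Finset.card_map, Finset.card_univ, Fintype.card_fin]⟩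
  rw [← Finset.sum_fiberwise_of_maps_to hmaps (fun σ => g (Finset.univ.map σ))]
  refine Finset.sum_congr rfl fun S hS => ?_
  rw [Finset.sum_congr rfl (fun σ hσ => by rw [(Finset.mem_filter.1 hσ).2]),
    Finset.sum_const, fibercard hS, nsmul_eq_mul]

end
section
variable {N m : ℕ}

private lemma injsum (Q : (Fin m → Fin N) → ℝ) :
    ∑ ω ∈ (univ : Finset (Fin m → Fin N)).filter (fun ω => Function.Injective ω), Q ω
      = ∑ σ : Fin m ↪ Fin N, Q ⇑σ := by
  refine Finset.sum_bij'
    (fun ω hω => (⟨ω, (Finset.mem_filter.1 hω).2⟩ : Fin m ↪ Fin N))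
    (fun σ _ => ⇑σ)
    (fun ω hω => Finset.mem_univ _)
    (fun σ _ => Finset.mem_filter.2 ⟨Finset.mem_univ _, σ.injective⟩)
    (fun ω hω => rfl) (fun σ _ => rfl) (fun ω hω => rfl)

private lemma card_inj :
    ((univ : Finset (Fin m → Fin N)).filter (fun ω => Function.Injective ω)).card
      = N.descFactorial m := by
  rw [← Fintype.card_subtype]
  rw [Fintype.card_congr (Equiv.subtypeInjectiveEquivEmbedding (Fin m) (Fin N))]
  rw [Fintype.card_embedding_eq, Fintype.card_fin, Fintype.card_fin]

private lemma cval_mul_choose (hm : m ≤ N) (hm0 : 0 < m) :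
    cval N m * (N.choose m : ℝ) = (N : ℝ) ^ m := by
  have h1 : ∑ S ∈ powersetCard m (univ : Finset (Fin N)), ∑ ω : Fin m → Fin N, wgt N m ω S
      = (N : ℝ) ^ m := by
    rw [Finset.sum_comm]
    rw [Finset.sum_congr rfl (fun ω _ => rowsum hm ω), Finset.sum_const, Finset.card_univ,
      Fintype.card_fun, Fintype.card_fin, Fintype.card_fin, nsmul_eq_mul, mul_one, Nat.cast_pow]
  rw [← h1, Finset.sum_congr rfl (fun S hS => massconst hm0 hS), Finset.sum_const,
    Finset.card_powersetCard, Finset.card_univ, Fintype.card_fin, nsmul_eq_mul, mul_comm]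

end

theorem stmt_9 (N m : ℕ) (hN : 0 < N) (hm : m ≤ N)
    (F : Finset (Fin N → ℝ)) (hF : F.Nonempty)
    (hbound : ∀ f ∈ F, ∀ x, f x ∈ Set.Icc (-1 : ℝ) 1)
    (hmean : ∀ f ∈ F, ∑ x, f x = 0) :
    0 ≤ (1 / (N : ℝ) ^ m) * (∑ ω : Fin m → Fin N, F.sup' hF fun f => ∑ i, f (ω i))
        - (1 / (Fintype.card (Fin m ↪ Fin N) : ℝ)) *
            (∑ ω : Fin m ↪ Fin N, F.sup' hF fun f => ∑ i, f (ω i))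
    ∧ (1 / (N : ℝ) ^ m) * (∑ ω : Fin m → Fin N, F.sup' hF fun f => ∑ i, f (ω i))
        - (1 / (Fintype.card (Fin m ↪ Fin N) : ℝ)) *
            (∑ ω : Fin m ↪ Fin N, F.sup' hF fun f => ∑ i, f (ω i))
      ≤ 2 * (m : ℝ) ^ 3 / (N : ℝ) := by
  classical
  rcases Nat.eq_zero_or_pos m with rfl | hm0
  · have h1 : ∀ ω : Fin 0 → Fin N, (F.sup' hF fun f => ∑ i, f (ω i)) = 0 := by
      intro ω
      rw [show (fun f : Fin N → ℝ => ∑ i : Fin 0, f (ω i)) = fun _ => (0:ℝ) from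
        funext fun f => by simp, Finset.sup'_const]
    have h2 : ∀ σ : Fin 0 ↪ Fin N, (F.sup' hF fun f => ∑ i, f (σ i)) = 0 := by
      intro σ
      rw [show (fun f : Fin N → ℝ => ∑ i : Fin 0, f (σ i)) = fun _ => (0:ℝ) from
        funext fun f => by simp, Finset.sup'_const]
    simp [Finset.sum_congr rfl (fun ω _ => h1 ω), Finset.sum_congr rfl (fun σ _ => h2 σ)]
  -- main case
  set Q : (Fin m → Fin N) → ℝ := fun ω => F.sup' hF fun f => ∑ i, f (ω i) with hQdef
  set QS : Finset (Fin N) → ℝ := fun S => F.sup' hF fun f => ∑ x ∈ S, f x with hQSdef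
  set pc := powersetCard m (univ : Finset (Fin N)) with hpc
  have hP0 : (0:ℝ) < (N:ℝ) ^ m := by positivity
  have hC0 : (0:ℝ) < (N.choose m : ℝ) := by exact_mod_cast Nat.choose_pos hm
  have hDnat : N.descFactorial m = Nat.factorial m * N.choose m :=
    Nat.descFactorial_eq_factorial_mul_choose N m
  have hD0 : (0:ℝ) < (N.descFactorial m : ℝ) := by
    rw [hDnat]; push_cast
    have := m.factorial_pos
    have : (0:ℝ) < (Nat.factorial m : ℝ) := by exact_mod_cast this
    positivity
  have hcardE : (Fintype.card (Fin m ↪ Fin N) : ℝ) = (N.descFactorial m : ℝ) := by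
    rw [Fintype.card_embedding_eq, Fintype.card_fin, Fintype.card_fin]
  have hQσ : ∀ σ : Fin m ↪ Fin N, (F.sup' hF fun f => ∑ i, f (σ i)) = QS (Finset.univ.map σ) := by
    intro σ
    apply Finset.sup'_congr hF rfl
    intro f hf
    exact (Finset.sum_map Finset.univ σ f).symm
  have hB : (∑ σ : Fin m ↪ Fin N, F.sup' hF fun f => ∑ i, f (σ i))
      = (Nat.factorial m : ℝ) * ∑ S ∈ pc, QS S := by
    rw [Finset.sum_congr rfl (fun σ _ => hQσ σ), embsum QS, Finset.mul_sum]
  have hE' : (1 / (Fintype.card (Fin m ↪ Fin N) : ℝ)) *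
      (∑ σ : Fin m ↪ Fin N, F.sup' hF fun f => ∑ i, f (σ i))
      = (1 / (N.choose m : ℝ)) * ∑ S ∈ pc, QS S := by
    rw [hB, hcardE, hDnat]
    have hf0 : (0:ℝ) < (Nat.factorial m : ℝ) := by exact_mod_cast m.factorial_pos
    push_cast
    field_simp
  -- bounds on Q
  have Qle : ∀ ω : Fin m → Fin N, Q ω ≤ (m:ℝ) := by
    intro ω
    apply Finset.sup'_le
    intro f hf
    calc ∑ i, f (ω i) ≤ ∑ _i : Fin m, (1:ℝ) :=
          Finset.sum_le_sum fun i _ => (hbound f hf (ω i)).2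
      _ = (m:ℝ) := by simp
  have Qge : ∀ ω : Fin m → Fin N, -(m:ℝ) ≤ Q ω := by
    intro ω
    obtain ⟨f0, hf0⟩ := hF
    refine le_trans ?_ (Finset.le_sup' (fun f => ∑ i, f (ω i)) hf0)
    calc -(m:ℝ) = ∑ _i : Fin m, (-1:ℝ) := by simp
      _ ≤ ∑ i, f0 (ω i) := Finset.sum_le_sum fun i _ => (hbound f0 hf0 (ω i)).1
  -- LOWER BOUND
  have hA : (∑ ω : Fin m → Fin N, Q ω) = ∑ S ∈ pc, ∑ ω : Fin m → Fin N, wgt N m ω S * Q ω := by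
    calc (∑ ω : Fin m → Fin N, Q ω)
        = ∑ ω : Fin m → Fin N, (∑ S ∈ pc, wgt N m ω S) * Q ω :=
          Finset.sum_congr rfl fun ω _ => by rw [rowsum hm ω, one_mul]
      _ = ∑ ω : Fin m → Fin N, ∑ S ∈ pc, wgt N m ω S * Q ω :=
          Finset.sum_congr rfl fun ω _ => Finset.sum_mul _ _ _
      _ = ∑ S ∈ pc, ∑ ω : Fin m → Fin N, wgt N m ω S * Q ω := Finset.sum_comm
  have hkey : ∀ S ∈ pc, cval N m * QS S ≤ ∑ ω : Fin m → Fin N, wgt N m ω S * Q ω := by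
    intro S hS
    obtain ⟨fS, hfSF, hfSQ⟩ := Finset.exists_mem_eq_sup' hF (fun f => ∑ x ∈ S, f x)
    calc cval N m * QS S = (∑ ω : Fin m → Fin N, wgt N m ω S) * ∑ x ∈ S, fS x := by
          rw [← massconst hm0 hS, hQSdef]; simp only []; rw [hfSQ]
      _ = ∑ ω : Fin m → Fin N, wgt N m ω S * (∑ i, fS (ω i)) := (colsum hm0 hS fS).symm
      _ ≤ ∑ ω : Fin m → Fin N, wgt N m ω S * Q ω := by
          refine Finset.sum_le_sum fun ω _ => ?_
          exact mul_le_mul_of_nonneg_left (Finset.le_sup' (fun f => ∑ i, f (ω i)) hfSF)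
            (wgt_nonneg ω S)
  have hlow : (1 / (N.choose m : ℝ)) * ∑ S ∈ pc, QS S
      ≤ (1 / (N : ℝ) ^ m) * ∑ ω : Fin m → Fin N, Q ω := by
    have h1 : cval N m * ∑ S ∈ pc, QS S ≤ ∑ ω : Fin m → Fin N, Q ω := by
      rw [hA, Finset.mul_sum]
      exact Finset.sum_le_sum hkey
    have h2 := mul_le_mul_of_nonneg_left h1 (le_of_lt (one_div_pos.2 hP0))
    have hcv : cval N m * (N.choose m : ℝ) = (N : ℝ) ^ m := cval_mul_choose hm hm0
    have hcveq : cval N m = (N : ℝ) ^ m / (N.choose m : ℝ) := by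
      rw [eq_div_iff hC0.ne']; exact hcv
    have h3 : (1 / (N : ℝ) ^ m) * (cval N m * ∑ S ∈ pc, QS S)
        = (1 / (N.choose m : ℝ)) * ∑ S ∈ pc, QS S := by
      rw [hcveq]; field_simp
    rw [h3] at h2
    exact h2
  constructor
  · rw [hE']
    linarith
  -- UPPER BOUND
  · have hsplit : (∑ ω : Fin m → Fin N, Q ω)
        = (∑ σ : Fin m ↪ Fin N, F.sup' hF fun f => ∑ i, f (σ i))
          + ∑ ω ∈ univ.filter (fun ω : Fin m → Fin N => ¬ Function.Injective ω), Q ω := by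
      rw [← Finset.sum_filter_add_sum_filter_not univ (fun ω : Fin m → Fin N =>
        Function.Injective ω) Q, injsum Q]
    have hcard_ni : ((univ.filter (fun ω : Fin m → Fin N => ¬ Function.Injective ω)).card : ℝ)
        = (N:ℝ)^m - (N.descFactorial m : ℝ) := by
      have h := Finset.card_filter_add_card_filter_not (s := (univ : Finset (Fin m → Fin N)))
        (p := fun ω => Function.Injective ω)
      rw [card_inj, Finset.card_univ, Fintype.card_fun, Fintype.card_fin, Fintype.card_fin] at h
      have := congrArg (fun n : ℕ => (n : ℝ)) h
      push_cast at this
      linarith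
    have f2 : (∑ ω ∈ univ.filter (fun ω : Fin m → Fin N => ¬ Function.Injective ω), Q ω)
        ≤ ((N:ℝ)^m - (N.descFactorial m : ℝ)) * (m:ℝ) := by
      calc (∑ ω ∈ univ.filter (fun ω : Fin m → Fin N => ¬ Function.Injective ω), Q ω)
          ≤ (univ.filter (fun ω : Fin m → Fin N => ¬ Function.Injective ω)).card • (m:ℝ) :=
            Finset.sum_le_card_nsmul _ _ _ (fun ω _ => Qle ω)
        _ = ((N:ℝ)^m - (N.descFactorial m : ℝ)) * (m:ℝ) := by
            rw [nsmul_eq_mul, hcard_ni]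
    have f3 : -((m:ℝ) * (N.descFactorial m : ℝ))
        ≤ ∑ σ : Fin m ↪ Fin N, F.sup' hF fun f => ∑ i, f (σ i) := by
      calc -((m:ℝ) * (N.descFactorial m : ℝ))
          = (Finset.univ : Finset (Fin m ↪ Fin N)).card • (-(m:ℝ)) := by
            rw [nsmul_eq_mul, Finset.card_univ, ← hcardE]; ring
        _ ≤ ∑ σ : Fin m ↪ Fin N, F.sup' hF fun f => ∑ i, f (σ i) :=
            Finset.card_nsmul_le_sum _ _ _ (fun σ _ => Qge ⇑σ)
    have f4 : (N.descFactorial m : ℝ) ≤ (N:ℝ)^m := by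
      have := Nat.descFactorial_le_pow N m
      exact_mod_cast this
    -- ratio bound
    have hprod : (N.descFactorial m : ℝ) / (N:ℝ)^m = ∏ i ∈ range m, (1 - (i:ℝ)/(N:ℝ)) := by
      have h1 : (N.descFactorial m : ℝ) = ∏ i ∈ range m, ((N:ℝ) - (i:ℝ)) := by
        rw [Nat.descFactorial_eq_prod_range, Nat.cast_prod]
        exact Finset.prod_congr rfl fun i hi =>
          Nat.cast_sub (le_trans (le_of_lt (Finset.mem_range.1 hi)) hm)
      have h2 : (N:ℝ)^m = ∏ _i ∈ range m, (N:ℝ) := by rw [Finset.prod_const, card_range]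
      rw [h1, h2, ← Finset.prod_div_distrib]
      exact Finset.prod_congr rfl fun i hi => by
        rw [sub_div, div_self (by positivity : (N:ℝ) ≠ 0)]
    have f5 : 1 - (N.descFactorial m : ℝ) / (N:ℝ)^m ≤ (m:ℝ)^2 / (N:ℝ) := by
      have hw := weier (range m) (fun i => (i:ℝ)/(N:ℝ))
        (fun i _ => by positivity)
        (fun i hi => by
          rw [div_le_one (by exact_mod_cast hN)]
          exact_mod_cast le_trans (le_of_lt (Finset.mem_range.1 hi)) hm)
      rw [← hprod] at hw
      have hsum : ∑ i ∈ range m, (i:ℝ)/(N:ℝ) ≤ (m:ℝ)^2 / (N:ℝ) := by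
        have hNpos : (0:ℝ) < (N:ℝ) := by exact_mod_cast hN
        have h1 : ∑ i ∈ range m, (i:ℝ) ≤ (m:ℝ)^2 := by
          calc ∑ i ∈ range m, (i:ℝ) ≤ ∑ _i ∈ range m, (m:ℝ) :=
                Finset.sum_le_sum (fun i hi => by exact_mod_cast (Finset.mem_range.1 hi).le)
            _ = (m:ℝ)^2 := by rw [Finset.sum_const, card_range, nsmul_eq_mul]; ring
        rw [← Finset.sum_div]
        exact (div_le_div_iff_of_pos_right hNpos).mpr h1
      linarith
    -- assemble
    set A := ∑ ω : Fin m → Fin N, Q ω with hAdef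
    set B := ∑ σ : Fin m ↪ Fin N, F.sup' hF fun f => ∑ i, f (σ i) with hBdef
    set K := ∑ ω ∈ univ.filter (fun ω : Fin m → Fin N => ¬ Function.Injective ω), Q ω with hKdef
    set Dr := (N.descFactorial m : ℝ) with hDrdef
    set P := (N:ℝ)^m with hPdef
    have step1 : (1/P) * A - (1/(Fintype.card (Fin m ↪ Fin N) : ℝ)) * B
        = (1/P) * K + (1/P - 1/Dr) * B := by
      rw [hcardE, hsplit]; ring
    have step2 : (1/P) * K ≤ (m:ℝ) * (1 - Dr/P) := by
      calc (1/P) * K ≤ (1/P) * ((P - Dr) * (m:ℝ)) :=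
            mul_le_mul_of_nonneg_left f2 (le_of_lt (one_div_pos.2 hP0))
        _ = (m:ℝ) * (1 - Dr/P) := by field_simp
    have step3 : (1/P - 1/Dr) * B ≤ (m:ℝ) * (1 - Dr/P) := by
      have hneg : 1/P - 1/Dr ≤ 0 := by
        have : 1/P ≤ 1/Dr := one_div_le_one_div_of_le hD0 f4
        linarith
      calc (1/P - 1/Dr) * B ≤ (1/P - 1/Dr) * (-((m:ℝ) * Dr)) :=
            mul_le_mul_of_nonpos_left f3 hneg
        _ = (m:ℝ) * Dr * (1/Dr - 1/P) := by ring
        _ = (m:ℝ) * (1 - Dr/P) := by field_simp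
    have step4 : (m:ℝ) * (1 - Dr/P) + (m:ℝ) * (1 - Dr/P) ≤ 2 * (m:ℝ)^3 / (N:ℝ) := by
      have hm0' : (0:ℝ) ≤ (m:ℝ) := by positivity
      have h := mul_le_mul_of_nonneg_left f5 hm0'
      calc (m:ℝ) * (1 - Dr/P) + (m:ℝ) * (1 - Dr/P) = 2 * ((m:ℝ) * (1 - Dr/P)) := by ring
        _ ≤ 2 * ((m:ℝ) * ((m:ℝ)^2/(N:ℝ))) := by linarith
        _ = 2 * (m:ℝ)^3 / (N:ℝ) := by ring
    linarith [step1, step2, step3, step4]
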